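/- The operator T = Id⊗Q_1 : ℓ_2 ⊗̂ ℓ_2 → ℓ_2, where Q_1 is the rank-one projection onto the first basis vector, restricted to the symmetric tensor product, is weakly compact but not completely continuous: the sequence u_n = e_n⊗e_1 + e_1⊗e_n is weakly null in ℓ_2 ⊗̂ ℓ_2 but ‖T(u_n)‖ does not tend to 0. -/

import Mathlib

open Filter Topology
open scoped ENNReal

noncomputable section

/-- The topological dual of a normed space (Mathlib's former `NormedSpace.Dual`, since removed). -/
abbrev NormedSpace.Dual (𝕜 : Type*) [NontriviallyNormedField 𝕜] (E : Type*)
    [SeminormedAddCommGroup E] [NormedSpace 𝕜 E] : Type _ := E →L[𝕜] 𝕜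

/-- The Hilbert space `ℓ₂`. -/
abbrev ellTwo : Type := lp (fun _ : ℕ => ℂ) 2

/-- The elementary tensor `x ⊗ y ∈ ℓ₂ ⊗̂ ℓ₂`, viewed canonically as a functional on the
space of bounded bilinear forms on `ℓ₂` (the dual of `ℓ₂ ⊗̂ ℓ₂`). -/
def elemTensor (x y : ellTwo) :
    NormedSpace.Dual ℂ (ContinuousMultilinearMap ℂ (fun _ : Fin 2 => ellTwo) ℂ) :=
  ContinuousMultilinearMap.apply ℂ (fun _ : Fin 2 => ellTwo) ℂ ![x, y]

/-- The projective tensor product `ℓ₂ ⊗̂ ℓ₂`, realized as the closed linear span of the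
elementary tensors inside the dual of the space of bounded bilinear forms on `ℓ₂`. -/
def ellTwoTensor :
    Submodule ℂ
      (NormedSpace.Dual ℂ (ContinuousMultilinearMap ℂ (fun _ : Fin 2 => ellTwo) ℂ)) :=
  (Submodule.span ℂ (Set.range (fun p : ellTwo × ellTwo => elemTensor p.1 p.2))).topologicalClosure

theorem elemTensor_mem (x y : ellTwo) : elemTensor x y ∈ ellTwoTensor :=
  Submodule.le_topologicalClosure _ (Submodule.subset_span ⟨(x, y), rfl⟩)

/-- The standard unit vectors of `ℓ₂`. -/
def e (n : ℕ) : ellTwo := lp.single 2 n 1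

/-- The sequence `u_n = e_n ⊗ e_1 + e_1 ⊗ e_n` in `ℓ₂ ⊗̂ ℓ₂` (indexing from `0`). -/
def u (n : ℕ) : ellTwoTensor :=
  ⟨elemTensor (e n) (e 0) + elemTensor (e 0) (e n),
    (ellTwoTensor).add_mem (elemTensor_mem _ _) (elemTensor_mem _ _)⟩

local notation "⟪" x ", " y "⟫" => @inner ℂ _ _ x y

abbrev DualBil := NormedSpace.Dual ℂ (ContinuousMultilinearMap ℂ (fun _ : Fin 2 => ellTwo) ℂ)

lemma norm_e (n : ℕ) : ‖e n‖ = 1 := by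
  have := lp.norm_single (p := (2:ℝ≥0∞)) (E := fun _ : ℕ => ℂ) (by norm_num) n (1:ℂ)
  simpa [e] using this

def coord0 : ellTwo →L[ℂ] ℂ := InnerProductSpace.toDual ℂ ellTwo (e 0)

lemma coord0_apply (y : ellTwo) : coord0 y = (y : ∀ _ : ℕ, ℂ) 0 := by
  simp [coord0, InnerProductSpace.toDual_apply_apply, e, lp.inner_single_left, RCLike.inner_apply]

lemma norm_coord0 : ‖coord0‖ = 1 := by
  rw [coord0, (InnerProductSpace.toDual ℂ ellTwo).norm_map, norm_e]

def biln (φ : ellTwo →L[ℂ] ℂ) : ContinuousMultilinearMap ℂ (fun _ : Fin 2 => ellTwo) ℂ :=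
  (φ.smulRight ((continuousMultilinearCurryFin1 ℂ ellTwo ℂ).symm coord0)).uncurryLeft

lemma biln_apply (φ : ellTwo →L[ℂ] ℂ) (v : Fin 2 → ellTwo) :
    biln φ v = φ (v 0) * (v 1 : ∀ _ : ℕ, ℂ) 0 := by
  simp [biln, ContinuousLinearMap.uncurryLeft_apply, coord0_apply, Fin.tail, smul_eq_mul]

lemma biln_norm_le (φ : ellTwo →L[ℂ] ℂ) : ‖biln φ‖ ≤ ‖φ‖ := by
  refine ContinuousMultilinearMap.opNorm_le_bound (norm_nonneg φ) fun v => ?_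
  rw [biln_apply, Fin.prod_univ_two, norm_mul]
  have h1 : ‖φ (v 0)‖ ≤ ‖φ‖ * ‖v 0‖ := φ.le_opNorm _
  have h2 : ‖(v 1 : ∀ _ : ℕ, ℂ) 0‖ ≤ ‖v 1‖ := lp.norm_apply_le_norm (by norm_num) (v 1) 0
  calc ‖φ (v 0)‖ * ‖(v 1 : ∀ _ : ℕ, ℂ) 0‖ ≤ (‖φ‖ * ‖v 0‖) * ‖v 1‖ := by
        exact mul_le_mul h1 h2 (norm_nonneg _) (by positivity)
    _ = ‖φ‖ * (‖v 0‖ * ‖v 1‖) := by ring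

lemma biln_add (φ ψ : ellTwo →L[ℂ] ℂ) : biln (φ + ψ) = biln φ + biln ψ := by
  ext v; simp [biln_apply]; ring

lemma biln_smul (c : ℂ) (φ : ellTwo →L[ℂ] ℂ) : biln (c • φ) = c • biln φ := by
  ext v; simp [biln_apply]; ring

def hmap (F : DualBil) : ellTwo →L[ℂ] ℂ :=
  LinearMap.mkContinuous
    { toFun := fun w => (starRingEnd ℂ) (F (biln (InnerProductSpace.toDual ℂ ellTwo w)))
      map_add' := fun w w' => by rw [map_add, biln_add, map_add, map_add]
      map_smul' := fun c w => by
        rw [map_smulₛₗ, biln_smul, map_smul, smul_eq_mul, map_mul, RingHom.id_apply,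
          RCLike.conj_conj, smul_eq_mul] }
    ‖F‖ (fun w => by
      simp only [LinearMap.coe_mk, AddHom.coe_mk, RCLike.norm_conj]
      calc ‖F (biln (InnerProductSpace.toDual ℂ ellTwo w))‖
          ≤ ‖F‖ * ‖biln (InnerProductSpace.toDual ℂ ellTwo w)‖ := F.le_opNorm _
        _ ≤ ‖F‖ * ‖(InnerProductSpace.toDual ℂ ellTwo) w‖ := by
            gcongr; exact biln_norm_le _
        _ = ‖F‖ * ‖w‖ := by rw [(InnerProductSpace.toDual ℂ ellTwo).norm_map])

lemma hmap_apply (F : DualBil) (w : ellTwo) :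
    hmap F w = (starRingEnd ℂ) (F (biln (InnerProductSpace.toDual ℂ ellTwo w))) := rfl

def Tfun (F : DualBil) : ellTwo := (InnerProductSpace.toDual ℂ ellTwo).symm (hmap F)

lemma apply_Tfun (F : DualBil) (φ : ellTwo →L[ℂ] ℂ) : φ (Tfun F) = F (biln φ) := by
  set w := (InnerProductSpace.toDual ℂ ellTwo).symm φ with hw
  have hφ : φ (Tfun F) = ⟪w, Tfun F⟫ := (InnerProductSpace.toDual_symm_apply).symm
  have h2 : ⟪Tfun F, w⟫ = hmap F w := InnerProductSpace.toDual_symm_apply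
  have h3 : ⟪w, Tfun F⟫ = (starRingEnd ℂ) (hmap F w) := by
    rw [← h2, inner_conj_symm]
  rw [hφ, h3, hmap_apply, RCLike.conj_conj, hw,
    LinearIsometryEquiv.apply_symm_apply]


lemma Tfun_add (F G : DualBil) : Tfun (F + G) = Tfun F + Tfun G := by
  rw [NormedSpace.eq_iff_forall_dual_eq ℂ]
  intro g
  simp [apply_Tfun, map_add]

lemma Tfun_smul (c : ℂ) (F : DualBil) : Tfun (c • F) = c • Tfun F := by
  rw [NormedSpace.eq_iff_forall_dual_eq ℂ]
  intro g
  simp [apply_Tfun, map_smul, smul_eq_mul, mul_comm]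

lemma Tfun_norm_le (F : DualBil) : ‖Tfun F‖ ≤ ‖F‖ := by
  rw [Tfun, (InnerProductSpace.toDual ℂ ellTwo).symm.norm_map]
  exact LinearMap.mkContinuous_norm_le _ (norm_nonneg F) _

def Tfull : DualBil →L[ℂ] ellTwo :=
  LinearMap.mkContinuous
    { toFun := Tfun
      map_add' := Tfun_add
      map_smul' := fun c F => by rw [Tfun_smul, RingHom.id_apply] }
    1 (fun F => by simpa using Tfun_norm_le F)

lemma Tfull_apply (F : DualBil) : Tfull F = Tfun F := rfl

lemma Tfull_elem (x y : ellTwo) : Tfull (elemTensor x y) = ((y : ∀ _ : ℕ, ℂ) 0) • x := by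
  rw [Tfull_apply, NormedSpace.eq_iff_forall_dual_eq ℂ]
  intro g
  rw [apply_Tfun]
  have : (elemTensor x y) (biln g) = biln g ![x, y] := rfl
  rw [this, biln_apply, map_smul]
  simp [smul_eq_mul]
  ring


lemma update_zero (x y a : ellTwo) : Function.update ![x, y] 0 a = ![a, y] := by
  ext i; fin_cases i <;> simp
lemma update_one (x y a : ellTwo) : Function.update ![x, y] 1 a = ![x, a] := by
  ext i; fin_cases i <;> simp

lemma elemTensor_apply (x y : ellTwo) (B : ContinuousMultilinearMap ℂ (fun _ : Fin 2 => ellTwo) ℂ) :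
    elemTensor x y B = B ![x, y] := rfl

lemma elemTensor_add_left (x x' y : ellTwo) :
    elemTensor (x + x') y = elemTensor x y + elemTensor x' y := by
  ext B
  simp only [elemTensor_apply, ContinuousLinearMap.add_apply]
  rw [← update_zero x y x, ← update_zero x y x', ← update_zero x y (x + x'),
    ContinuousMultilinearMap.map_update_add]

lemma elemTensor_smul_left (c : ℂ) (x y : ellTwo) :
    elemTensor (c • x) y = c • elemTensor x y := by
  ext B
  simp only [elemTensor_apply, ContinuousLinearMap.smul_apply]
  rw [← update_zero x y (c • x), ContinuousMultilinearMap.map_update_smul, update_zero]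

lemma elemTensor_add_right (x y y' : ellTwo) :
    elemTensor x (y + y') = elemTensor x y + elemTensor x y' := by
  ext B
  simp only [elemTensor_apply, ContinuousLinearMap.add_apply]
  rw [← update_one x y y, ← update_one x y y', ← update_one x y (y + y'),
    ContinuousMultilinearMap.map_update_add]

lemma elemTensor_smul_right (c : ℂ) (x y : ellTwo) :
    elemTensor x (c • y) = c • elemTensor x y := by
  ext B
  simp only [elemTensor_apply, ContinuousLinearMap.smul_apply]
  rw [← update_one x y (c • y), ContinuousMultilinearMap.map_update_smul, update_one]

lemma elemTensor_norm_le (x y : ellTwo) : ‖elemTensor x y‖ ≤ ‖x‖ * ‖y‖ := by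
  refine ContinuousLinearMap.opNorm_le_bound _ (by positivity) fun B => ?_
  rw [elemTensor_apply]
  calc ‖B ![x, y]‖ ≤ ‖B‖ * ∏ i, ‖(![x, y] : Fin 2 → ellTwo) i‖ := B.le_opNorm _
    _ = ‖B‖ * (‖x‖ * ‖y‖) := by rw [Fin.prod_univ_two]; simp
    _ = ‖x‖ * ‖y‖ * ‖B‖ := by ring

def iota1 : ellTwo →L[ℂ] ellTwoTensor :=
  LinearMap.mkContinuous
    { toFun := fun x => (⟨elemTensor x (e 0), elemTensor_mem _ _⟩ : ellTwoTensor)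
      map_add' := fun x x' => by ext1; exact elemTensor_add_left x x' (e 0)
      map_smul' := fun c x => by ext1; exact elemTensor_smul_left c x (e 0) }
    1 (fun x => by
      show ‖elemTensor x (e 0)‖ ≤ 1 * ‖x‖
      simpa [norm_e] using elemTensor_norm_le x (e 0))

def iota2 : ellTwo →L[ℂ] ellTwoTensor :=
  LinearMap.mkContinuous
    { toFun := fun y => (⟨elemTensor (e 0) y, elemTensor_mem _ _⟩ : ellTwoTensor)
      map_add' := fun y y' => by ext1; exact elemTensor_add_right (e 0) y y'
      map_smul' := fun c y => by ext1; exact elemTensor_smul_right c (e 0) y }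
    1 (fun y => by
      show ‖elemTensor (e 0) y‖ ≤ 1 * ‖y‖
      simpa [norm_e] using elemTensor_norm_le (e 0) y)



lemma coord_tendsto_zero (w : ellTwo) :
    Tendsto (fun n => (w : ∀ _ : ℕ, ℂ) n) atTop (𝓝 0) := by
  have hsum : Summable fun n => ‖(w : ∀ _ : ℕ, ℂ) n‖ ^ (2 : ℝ) := by
    have := lp.memℓp w
    rwa [memℓp_gen_iff (by norm_num)] at this
  have h1 : Tendsto (fun n => ‖(w : ∀ _ : ℕ, ℂ) n‖ ^ (2 : ℝ)) atTop (𝓝 0) :=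
    hsum.tendsto_atTop_zero
  have h2 : Tendsto (fun n => (‖(w : ∀ _ : ℕ, ℂ) n‖ ^ (2 : ℝ)) ^ ((1 : ℝ) / 2)) atTop
      (𝓝 ((0 : ℝ) ^ ((1 : ℝ) / 2))) := h1.rpow_const (Or.inr (by norm_num))
  have h3 : ∀ n, (‖(w : ∀ _ : ℕ, ℂ) n‖ ^ (2 : ℝ)) ^ ((1 : ℝ) / 2) = ‖(w : ∀ _ : ℕ, ℂ) n‖ := by
    intro n
    rw [← Real.rpow_mul (norm_nonneg _)]
    norm_num
  rw [tendsto_zero_iff_norm_tendsto_zero]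
  refine (tendsto_congr fun n => (h3 n)).mp ?_
  simpa [Real.zero_rpow (by norm_num : (1:ℝ)/2 ≠ 0)] using h2

lemma e_weak_null (φ : ellTwo →L[ℂ] ℂ) : Tendsto (fun n => φ (e n)) atTop (𝓝 0) := by
  set w := (InnerProductSpace.toDual ℂ ellTwo).symm φ with hw
  have hφ : ∀ n, φ (e n) = ⟪w, e n⟫ := fun n => (InnerProductSpace.toDual_symm_apply).symm
  have h : ∀ n, ⟪w, e n⟫ = (starRingEnd ℂ) ((w : ∀ _ : ℕ, ℂ) n) := by
    intro n
    rw [e, lp.inner_single_right, RCLike.inner_apply]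
    simp
  simp only [hφ, h]
  have := coord_tendsto_zero w
  rw [tendsto_zero_iff_norm_tendsto_zero] at this ⊢
  simpa using this


lemma weak_seq_compact (a : ℕ → ellTwo) (ha : ∀ n, ‖a n‖ ≤ 1) :
    ∃ ψ : ℕ → ℕ, StrictMono ψ ∧ ∃ z : ellTwo,
      ∀ φ : ellTwo →L[ℂ] ℂ, Tendsto (fun n => φ (a (ψ n))) atTop (𝓝 (φ z)) := by
  -- compactness of the product of closed balls
  have hS : IsCompact (Set.univ.pi fun _ : ℕ => Metric.closedBall (0 : ℂ) 1) :=
    isCompact_univ_pi fun _ => isCompact_closedBall 0 1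
  have hmem : ∀ n, (a n : ∀ _ : ℕ, ℂ) ∈ (Set.univ.pi fun _ : ℕ => Metric.closedBall (0 : ℂ) 1) := by
    intro n
    rw [Set.mem_univ_pi]
    intro k
    rw [Metric.mem_closedBall, dist_zero_right]
    exact (lp.norm_apply_le_norm (by norm_num) (a n) k).trans (ha n)
  obtain ⟨f, -, ψ, hψ, hconv⟩ := hS.isSeqCompact hmem
  refine ⟨ψ, hψ, ?_⟩
  have hconv' : Tendsto (id fun n => ((a (ψ n) : ∀ _ : ℕ, ℂ))) atTop (𝓝 f) := hconv
  have hbdd : Bornology.IsBounded (Set.range fun n => a (ψ n)) := by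
    rw [isBounded_iff_forall_norm_le]
    exact ⟨1, by rintro _ ⟨n, rfl⟩; exact ha _⟩
  have hf : Memℓp f 2 := lp.memℓp_of_tendsto hbdd hconv'
  set z : ellTwo := ⟨f, hf⟩ with hz
  have hcoord : ∀ k, Tendsto (fun n => (a (ψ n) : ∀ _ : ℕ, ℂ) k) atTop (𝓝 ((z : ∀ _ : ℕ, ℂ) k)) :=
    fun k => (tendsto_pi_nhds.mp hconv k)
  refine ⟨z, fun φ => ?_⟩
  set w := (InnerProductSpace.toDual ℂ ellTwo).symm φ with hw
  have hφ : ∀ x, φ x = ⟪w, x⟫ := fun x => (InnerProductSpace.toDual_symm_apply).symm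
  simp only [hφ]
  rw [Metric.tendsto_atTop]
  intro ε hε
  -- finitely supported approximation of w
  have hsingle : HasSum (fun k : ℕ => lp.single 2 k ((w : ∀ _ : ℕ, ℂ) k)) w :=
    lp.hasSum_single (by norm_num) w
  have : ∀ᶠ s : Finset ℕ in atTop,
      dist (∑ k ∈ s, lp.single 2 k ((w : ∀ _ : ℕ, ℂ) k)) w < ε / 4 :=
    hsingle.eventually (Metric.ball_mem_nhds w (by positivity))
  obtain ⟨s, hs⟩ := this.exists
  set ws : ellTwo := ∑ k ∈ s, lp.single 2 k ((w : ∀ _ : ℕ, ℂ) k) with hws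
  have hr : ‖w - ws‖ < ε / 4 := by
    rw [← dist_eq_norm, dist_comm]
    exact hs
  -- the finite part converges
  have hfin : Tendsto (fun n => ∑ k ∈ s,
      (starRingEnd ℂ) ((w : ∀ _ : ℕ, ℂ) k) *
        ((a (ψ n) : ∀ _ : ℕ, ℂ) k - (z : ∀ _ : ℕ, ℂ) k)) atTop (𝓝 0) := by
    have : Tendsto (fun n => ∑ k ∈ s,
        (starRingEnd ℂ) ((w : ∀ _ : ℕ, ℂ) k) *
          ((a (ψ n) : ∀ _ : ℕ, ℂ) k - (z : ∀ _ : ℕ, ℂ) k)) atTop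
        (𝓝 (∑ k ∈ s, (starRingEnd ℂ) ((w : ∀ _ : ℕ, ℂ) k) *
          ((z : ∀ _ : ℕ, ℂ) k - (z : ∀ _ : ℕ, ℂ) k))) := by
      refine tendsto_finset_sum s fun k _ => ?_
      exact (((hcoord k).sub_const _).const_mul _)
    simpa using this
  rw [tendsto_zero_iff_norm_tendsto_zero] at hfin
  have hN := (hfin.eventually_lt_const (by positivity : (0:ℝ) < ε / 4)).exists_forall_of_atTop
  obtain ⟨N, hN⟩ := hN
  refine ⟨N, fun n hn => ?_⟩
  have hdec : ⟪w, a (ψ n)⟫ - ⟪w, z⟫ =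
      (∑ k ∈ s, (starRingEnd ℂ) ((w : ∀ _ : ℕ, ℂ) k) *
        ((a (ψ n) : ∀ _ : ℕ, ℂ) k - (z : ∀ _ : ℕ, ℂ) k)) + ⟪w - ws, a (ψ n) - z⟫ := by
    have h1 : ⟪w, a (ψ n)⟫ - ⟪w, z⟫ = ⟪w, a (ψ n) - z⟫ := by rw [inner_sub_right]
    have h2 : ⟪w, a (ψ n) - z⟫ = ⟪ws, a (ψ n) - z⟫ + ⟪w - ws, a (ψ n) - z⟫ := by
      rw [← inner_add_left]
      congr 1
      abel
    have h3 : ⟪ws, a (ψ n) - z⟫ = ∑ k ∈ s, (starRingEnd ℂ) ((w : ∀ _ : ℕ, ℂ) k) *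
        ((a (ψ n) : ∀ _ : ℕ, ℂ) k - (z : ∀ _ : ℕ, ℂ) k) := by
      rw [hws, sum_inner]
      refine Finset.sum_congr rfl fun k _ => ?_
      rw [lp.inner_single_left, RCLike.inner_apply, lp.coeFn_sub, Pi.sub_apply]
      ring
    rw [h1, h2, h3]
  rw [dist_eq_norm, hdec]
  have hb1 : ‖⟪w - ws, a (ψ n) - z⟫‖ ≤ (ε / 4) * 2 := by
    calc ‖⟪w - ws, a (ψ n) - z⟫‖ ≤ ‖w - ws‖ * ‖a (ψ n) - z‖ := norm_inner_le_norm _ _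
      _ ≤ (ε / 4) * 2 := by
        refine mul_le_mul hr.le ?_ (norm_nonneg _) (by positivity)
        have hz1 : ‖z‖ ≤ 1 := lp.norm_le_of_tendsto (Eventually.of_forall fun n => ha (ψ n)) hconv'
        calc ‖a (ψ n) - z‖ ≤ ‖a (ψ n)‖ + ‖z‖ := norm_sub_le _ _
          _ ≤ 1 + 1 := add_le_add (ha _) hz1
          _ = 2 := by norm_num
  calc ‖(∑ k ∈ s, (starRingEnd ℂ) ((w : ∀ _ : ℕ, ℂ) k) *
        ((a (ψ n) : ∀ _ : ℕ, ℂ) k - (z : ∀ _ : ℕ, ℂ) k)) + ⟪w - ws, a (ψ n) - z⟫‖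
      ≤ ‖∑ k ∈ s, (starRingEnd ℂ) ((w : ∀ _ : ℕ, ℂ) k) *
        ((a (ψ n) : ∀ _ : ℕ, ℂ) k - (z : ∀ _ : ℕ, ℂ) k)‖ + ‖⟪w - ws, a (ψ n) - z⟫‖ :=
        norm_add_le _ _
    _ < ε / 4 + (ε / 4) * 2 := by
        have := hN n hn
        exact add_lt_add_of_lt_of_le this hb1
    _ < ε := by linarith



/-- The operator `Id ⊗ Q₁ : ℓ₂ ⊗̂ ℓ₂ → ℓ₂` (with `Q₁` the rank-one projection onto the
first basis vector), i.e. `x ⊗ y ↦ ⟨y, e₁⟩ x`, is weakly compact, and the sequence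
`u_n = e_n ⊗ e_1 + e_1 ⊗ e_n` is weakly null in `ℓ₂ ⊗̂ ℓ₂`, yet `‖T u_n‖ ↛ 0`; so `T`
is weakly compact but not completely continuous. -/
theorem id_tensor_Q1_weakly_compact_not_completely_continuous :
    ∃ T : ellTwoTensor →L[ℂ] ellTwo,
      (∀ x y : ellTwo, T ⟨elemTensor x y, elemTensor_mem x y⟩ = ((y : ∀ _ : ℕ, ℂ) 0) • x) ∧
      (∀ v : ℕ → ellTwoTensor, (∀ n, ‖v n‖ ≤ 1) →
        ∃ ψ : ℕ → ℕ, StrictMono ψ ∧ ∃ z : ellTwo,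
          ∀ φ : ellTwo →L[ℂ] ℂ, Tendsto (fun n => φ (T (v (ψ n)))) atTop (𝓝 (φ z))) ∧
      (∀ Φ : ellTwoTensor →L[ℂ] ℂ, Tendsto (fun n => Φ (u n)) atTop (𝓝 0)) ∧
      ¬ Tendsto (fun n => ‖T (u n)‖) atTop (𝓝 0) := by
  refine ⟨Tfull.comp (ellTwoTensor.subtypeL), ?_, ?_, ?_, ?_⟩
  · intro x y
    exact Tfull_elem x y
  · intro v hv
    refine weak_seq_compact (fun n => (Tfull.comp (ellTwoTensor.subtypeL)) (v n)) fun n => ?_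
    calc ‖Tfun ((v n : DualBil))‖ ≤ ‖(v n : DualBil)‖ := Tfun_norm_le _
      _ = ‖v n‖ := rfl
      _ ≤ 1 := hv n
  · intro Φ
    have hu : ∀ n, Φ (u n) = (Φ.comp iota1) (e n) + (Φ.comp iota2) (e n) := by
      intro n
      have : u n = iota1 (e n) + iota2 (e n) := Subtype.ext rfl
      rw [this, map_add]
      rfl
    have := (e_weak_null (Φ.comp iota1)).add (e_weak_null (Φ.comp iota2))
    rw [add_zero] at this
    exact (tendsto_congr hu).mpr this
  · intro h
    have hval : ∀ n, 1 ≤ n → ‖(Tfull.comp (ellTwoTensor.subtypeL)) (u n)‖ = 1 := by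
      intro n hn
      have h1 : (Tfull.comp (ellTwoTensor.subtypeL)) (u n)
          = Tfull (elemTensor (e n) (e 0)) + Tfull (elemTensor (e 0) (e n)) := by
        show Tfull (elemTensor (e n) (e 0) + elemTensor (e 0) (e n)) = _
        rw [map_add]
      have h2 : ((e 0 : ∀ _ : ℕ, ℂ) 0) = 1 :=
        lp.single_apply_self (E := fun _ : ℕ => ℂ) 2 0 1
      have h3 : ((e n : ∀ _ : ℕ, ℂ) 0) = 0 :=
        lp.single_apply_ne (E := fun _ : ℕ => ℂ) 2 n 1 (by omega : (0:ℕ) ≠ n)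
      rw [h1, Tfull_elem, Tfull_elem, h2, h3]
      simp [norm_e]
    obtain ⟨n, hn1, hn2⟩ := ((h.eventually_lt_const one_pos).and (eventually_ge_atTop 1)).exists
    rw [hval n hn2] at hn1
    exact lt_irrefl _ hn1

end
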